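/- Let B be a generalized Bayesian network with cutset C, let γ be a distribution over assignments of C, and let M = (Asg(C), P) be the cutset Markov chain of B with respect to C. Then the following four statements are equivalent: (a) γ = γ·P; (b) there exists a distribution γ0 over assignments of C such that, with γ_{i+1} = γ_i·P, γ is the Cesàro limit lim_{n→∞} (1/(n+1)) Σ_{i=0}^{n} γ_i; (c) γ belongs to the convex hull of the long-run frequency distributions lrf_D of the bottom SCCs D of M (each padded with zero entries outside D); (d) γ = Next(B, C, γ)|_C. -/

import Mathlib

open Filter
open scoped Classical

noncomputable section

namespace GBNPaper

variable {V : Type} [Fintype V] [DecidableEq V]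

/-- A distribution over a finite type: nonnegative values summing to one. -/
def IsDist {α : Type} [Fintype α] (μ : α → ℝ) : Prop :=
  (∀ a, 0 ≤ μ a) ∧ ∑ a, μ a = 1

/-- The set of parents of a node `X` w.r.t. an edge set `E`. -/
def Pre (E : Finset (V × V)) (X : V) : Finset V :=
  (E.filter fun e => e.2 = X).image Prod.fst

/-- The set of initial (parentless) nodes. -/
def InitSet (E : Finset (V × V)) : Finset V :=
  Finset.univ.filter fun X => Pre E X = ∅

/-- Assignments over a subset `U` of the nodes. -/
abbrev Asg (U : Finset V) : Type := {x // x ∈ U} → Bool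

/-- A full assignment `b` agrees with a partial assignment `d` on `U`. -/
abbrev Agrees (b : V → Bool) (U : Finset V) (d : Asg U) : Prop :=
  ∀ x : {x // x ∈ U}, b x.1 = d x

/-- A generalized Bayesian network over node set `V`. -/
structure GBN (V : Type) [Fintype V] [DecidableEq V] where
  /-- the directed edges -/
  edges : Finset (V × V)
  /-- CPT entries: the probability of `X = T` given an assignment of the parents of `X` -/
  cpt : (X : V) → Asg (Pre edges X) → ℝ
  cpt_nonneg : ∀ X b, 0 ≤ cpt X b
  cpt_le_one : ∀ X b, cpt X b ≤ 1
  /-- the initial distribution over assignments of the initial nodes -/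
  ι : Asg (InitSet edges) → ℝ
  ι_dist : IsDist ι

/-- Probability of an event (set of full assignments) under `μ`. -/
def probIf (μ : (V → Bool) → ℝ) (p : (V → Bool) → Prop) : ℝ :=
  ∑ b : V → Bool, if p b then μ b else 0

/-- The marginal distribution of `μ` on `U`. -/
def marginal (μ : (V → Bool) → ℝ) (U : Finset V) : Asg U → ℝ :=
  fun d => probIf μ fun b => Agrees b U d

/-- `Pr(X = v | parents as given by b)`. -/
def copyProb (B : GBN V) (X : V) (v : Bool) (b : V → Bool) : ℝ :=
  if v then B.cpt X (fun p => b p.1) else 1 - B.cpt X (fun p => b p.1)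

/-- The standard BN semantics (chain rule) of a GBN. -/
def distBN (B : GBN V) (b : V → Bool) : ℝ :=
  B.ι (fun x => b x.1) *
    ∏ X ∈ Finset.univ \ InitSet B.edges, copyProb B X (b X) b

/-- The edge set contains no directed cycle. -/
def Acyclic (E : Finset (V × V)) : Prop :=
  ∀ x : V, ¬ Relation.TransGen (fun a b => (a, b) ∈ E) x x

/-- `C` is a cutset: every directed cycle contains a node of `C`. -/
def IsCutset (E : Finset (V × V)) (C : Finset V) : Prop :=
  ∀ x : V, ¬ Relation.TransGen (fun a b => (a, b) ∈ E ∧ a ∉ C ∧ b ∉ C) x x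

/-- The standard BN semantics of the `C`-dissected GBN `B↑C↑γ`, as a joint
distribution over assignments of the original nodes `V` together with
assignments of the copies `C'` of the cutset nodes. -/
def distDissect (B : GBN V) (C : Finset V) (γ : Asg C → ℝ)
    (b : V → Bool) (c : Asg C) : ℝ :=
  B.ι (fun x => b x.1) * γ (fun x => b x.1) *
    (∏ X ∈ (Finset.univ \ InitSet B.edges) \ C, copyProb B X (b X) b) *
    ∏ Y ∈ C.attach, copyProb B Y.1 (c Y) b

/-- `Next(B,C,γ)`: restrict `dist_BN(B↑C↑γ)` to `(V∖C) ∪ C'` and re-identify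
the copies with the original cutset nodes. -/
def Next (B : GBN V) (C : Finset V) (γ : Asg C → ℝ) (a : V → Bool) : ℝ :=
  ∑ b : V → Bool,
    if ∀ x : V, x ∉ C → b x = a x then distDissect B C γ b (fun y => a y.1) else 0

/-- `Extend(B,C,γ) = dist_BN(B↑C↑γ)|_V`. -/
def Extend (B : GBN V) (C : Finset V) (γ : Asg C → ℝ) (a : V → Bool) : ℝ :=
  ∑ c : Asg C, distDissect B C γ a c

/-- Dirac (point) distribution. -/
def DiracD {α : Type} [DecidableEq α] (b : α) : α → ℝ := fun c => if c = b then 1 else 0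

/-- Transition matrix of the cutset Markov chain `M_{B↑C}`:
`P(b,c) = Next(B,C,Dirac(b))|_C (c)`. -/
def cutsetP (B : GBN V) (C : Finset V) (b c : Asg C) : ℝ :=
  marginal (Next B C (DiracD b)) C c

/-- Vector-matrix multiplication `γ·P`. -/
def vecMul {α : Type} [Fintype α] (γ : α → ℝ) (P : α → α → ℝ) : α → ℝ :=
  fun c => ∑ b, γ b * P b c

/-- The transient distributions `γ0·P^n`. -/
def matIter {α : Type} [Fintype α] (P : α → α → ℝ) (γ0 : α → ℝ) : ℕ → (α → ℝ)
  | 0 => γ0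
  | n + 1 => vecMul (matIter P γ0 n) P

/-- The sequence `γ_{n+1} = Next(B,C,γ_n)|_C`. -/
def nextSeq (B : GBN V) (C : Finset V) (γ0 : Asg C → ℝ) : ℕ → (Asg C → ℝ)
  | 0 => γ0
  | n + 1 => marginal (Next B C (nextSeq B C γ0 n)) C

/-- Cesàro averages of a sequence of vectors. -/
def cesaro {α : Type} (f : ℕ → α → ℝ) (n : ℕ) : α → ℝ :=
  fun a => (∑ i ∈ Finset.range (n + 1), f i a) / (n + 1)

/-- The Markov chain semantics `[B]_{MC-C}`: image of
`γ0 ↦ Extend(B,C,lrf^{γ0})` over all initial cutset distributions `γ0`,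
where `lrf^{γ0}` is the Cesàro limit of the transient distributions. -/
def MCSem (B : GBN V) (C : Finset V) : Set ((V → Bool) → ℝ) :=
  { μ | ∃ γ0 γ, IsDist γ0 ∧
      Tendsto (cesaro (matIter (cutsetP B C) γ0)) atTop (nhds γ) ∧
      μ = Extend B C γ }

/-- The limit semantics `[B]_{Lim-C}`. -/
def LimSem (B : GBN V) (C : Finset V) : Set ((V → Bool) → ℝ) :=
  { μ | ∃ γ0 γ, IsDist γ0 ∧
      Tendsto (nextSeq B C γ0) atTop (nhds γ) ∧
      μ = Extend B C γ }

/-- The limit average semantics `[B]_{LimAvg-C}`. -/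
def LimAvgSem (B : GBN V) (C : Finset V) : Set ((V → Bool) → ℝ) :=
  { μ | ∃ γ0 γ, IsDist γ0 ∧
      Tendsto (cesaro (nextSeq B C γ0)) atTop (nhds γ) ∧
      μ = Extend B C γ }

/-- The Markov chain semantics in stationary-distribution form:
`{ Extend(B,C,γ) : γ a distribution with γ = γ·P }`. -/
def MCStatSem (B : GBN V) (C : Finset V) : Set ((V → Bool) → ℝ) :=
  { μ | ∃ γ : Asg C → ℝ, IsDist γ ∧ γ = vecMul γ (cutsetP B C) ∧ μ = Extend B C γ }

/-- Strong CPT-consistency of `μ` for node `X`. -/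
def StrongCPT (B : GBN V) (μ : (V → Bool) → ℝ) (X : V) : Prop :=
  ∀ c : Asg (Pre B.edges X),
    probIf μ (fun f => f X = true ∧ Agrees f (Pre B.edges X) c) =
      probIf μ (fun f => Agrees f (Pre B.edges X) c) * B.cpt X c

/-- Weak CPT-consistency of `μ` for node `X`. -/
def WeakCPT (B : GBN V) (μ : (V → Bool) → ℝ) (X : V) : Prop :=
  probIf μ (fun f => f X = true) =
    ∑ c : Asg (Pre B.edges X),
      probIf μ (fun f => Agrees f (Pre B.edges X) c) * B.cpt X c

/-- The CPT semantics `[B]_{Cpt}`. -/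
def CptSem (B : GBN V) : Set ((V → Bool) → ℝ) :=
  { μ | IsDist μ ∧ marginal μ (InitSet B.edges) = B.ι ∧
      ∀ X, X ∉ InitSet B.edges → StrongCPT B μ X }

/-- `(X ⊥ Y | Z) ∈ Indep(μ)`. -/
def IndepTriple (μ : (V → Bool) → ℝ) (X Y Z : Finset V) : Prop :=
  ∀ (a : Asg X) (b : Asg Y) (c : Asg Z),
    probIf μ (fun f => Agrees f Y b ∧ Agrees f Z c) = 0 ∨
    probIf μ (fun f => Agrees f X a ∧ Agrees f Y b ∧ Agrees f Z c) /
        probIf μ (fun f => Agrees f Y b ∧ Agrees f Z c) =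
      probIf μ (fun f => Agrees f X a ∧ Agrees f Z c) /
        probIf μ (fun f => Agrees f Z c)

def PairwiseDisjoint3 (X Y Z : Finset V) : Prop :=
  Disjoint X Y ∧ Disjoint X Z ∧ Disjoint Y Z

/-- `Indep(μ)` as a set of triples. -/
def IndepSet (μ : (V → Bool) → ℝ) : Set (Finset V × Finset V × Finset V) :=
  { t | PairwiseDisjoint3 t.1 t.2.1 t.2.2 ∧ IndepTriple μ t.1 t.2.1 t.2.2 }

/-- The CPT-I semantics `[B]_{Cpt-I}`. -/
def CptISem (B : GBN V) (I : Set (Finset V × Finset V × Finset V)) :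
    Set ((V → Bool) → ℝ) :=
  { μ | μ ∈ CptSem B ∧ I ⊆ IndepSet μ }

/-! d-separation -/

def Adjacent (E : Finset (V × V)) (x y : V) : Prop := (x, y) ∈ E ∨ (y, x) ∈ E

/-- Reachability along directed edges (including the node itself). -/
def Reaches (E : Finset (V × V)) (x y : V) : Prop :=
  Relation.ReflTransGen (fun a b => (a, b) ∈ E) x y

/-- An intermediate triple `a, w, b` on a path blocks it given `Z`:
either `w ∈ Z` and `w` lies in a chain or a fork, or `w` lies in a collider
and no node reachable from `w` (including `w`) is in `Z`. -/
def BlockedTriple (E : Finset (V × V)) (Z : Finset V) (a w b : V) : Prop :=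
  (w ∈ Z ∧ (((a, w) ∈ E ∧ (w, b) ∈ E) ∨ ((b, w) ∈ E ∧ (w, a) ∈ E) ∨
      ((w, a) ∈ E ∧ (w, b) ∈ E))) ∨
  ((a, w) ∈ E ∧ (b, w) ∈ E ∧ ∀ d, Reaches E w d → d ∉ Z)

/-- A path (as a list of nodes) is blocked given `Z`. -/
def Blocked (E : Finset (V × V)) (Z : Finset V) (W : List V) : Prop :=
  ∃ l₁ a w b l₂, W = l₁ ++ a :: w :: b :: l₂ ∧ BlockedTriple E Z a w b

/-- `x` and `y` are d-separated given `Z`: every undirected simple path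
from `x` to `y` is blocked given `Z`. -/
def DSepNodes (E : Finset (V × V)) (x y : V) (Z : Finset V) : Prop :=
  ∀ W : List V, W.Chain' (Adjacent E) → W.Nodup →
    W.head? = some x → W.getLast? = some y → Blocked E Z W

def DSep (E : Finset (V × V)) (X Y Z : Finset V) : Prop :=
  ∀ x ∈ X, ∀ y ∈ Y, DSepNodes E x y Z

/-- `d-sep(G)` as a set of triples of pairwise disjoint node sets. -/
def DSepSet (E : Finset (V × V)) : Set (Finset V × Finset V × Finset V) :=
  { t | PairwiseDisjoint3 t.1 t.2.1 t.2.2 ∧ DSep E t.1 t.2.1 t.2.2 }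

/-- `Close(G)`: add an edge between every ordered pair of distinct initial nodes. -/
def Close (E : Finset (V × V)) : Finset (V × V) :=
  E ∪ ((InitSet E ×ˢ InitSet E).filter fun p => p.1 ≠ p.2)

/-- `G[C]`: remove all edges into nodes of `C` (so the nodes of `C` are initial). -/
def CutGraph (E : Finset (V × V)) (C : Finset V) : Finset (V × V) :=
  E.filter fun e => e.2 ∉ C

/-- `ι` is a product distribution: it factorizes into its single-node marginals,
i.e. the initial nodes are mutually independent under `ι`. -/
def IsProductDist {U : Finset V} (ι : Asg U → ℝ) : Prop :=
  ∀ b : Asg U,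
    ι b = ∏ x : {x // x ∈ U}, ∑ b' : Asg U, if b' x = b x then ι b' else 0

/-! Markov chain notions -/

/-- Reachability in the underlying graph of a DTMC. -/
def MCReach {α : Type} (P : α → α → ℝ) (x y : α) : Prop :=
  Relation.ReflTransGen (fun a b => 0 < P a b) x y

/-- Bottom strongly connected component of a DTMC: nonempty, closed under
reachability, and strongly connected. -/
def IsBSCC {α : Type} (P : α → α → ℝ) (D : Set α) : Prop :=
  D.Nonempty ∧ (∀ x ∈ D, ∀ y, MCReach P x y → y ∈ D) ∧
    ∀ x ∈ D, ∀ y ∈ D, MCReach P x y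

/-- Walks of a given length along positive-probability transitions. -/
def walkLen {α : Type} (P : α → α → ℝ) : ℕ → α → α → Prop
  | 0, x, y => x = y
  | n + 1, x, y => ∃ z, 0 < P x z ∧ walkLen P n z y

/-- The lengths of the cycles of `D`. -/
def CycleLens {α : Type} (P : α → α → ℝ) (D : Set α) : Set ℕ :=
  { n | 0 < n ∧ ∃ x ∈ D, walkLen P n x x }

/-- `D` is aperiodic: the gcd of the lengths of its cycles equals 1. -/
def AperiodicBSCC {α : Type} (P : α → α → ℝ) (D : Set α) : Prop :=
  ∀ d : ℕ, (∀ n ∈ CycleLens P D, d ∣ n) → d = 1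

/-- `D` is periodic: the gcd of the lengths of its cycles is greater than 1. -/
def PeriodicBSCC {α : Type} (P : α → α → ℝ) (D : Set α) : Prop :=
  ∃ d : ℕ, 1 < d ∧ ∀ n ∈ CycleLens P D, d ∣ n

/-- A GBN is smooth if all CPT entries and all values of `ι` lie in `(0,1)`. -/
def Smooth (B : GBN V) : Prop :=
  (∀ X b, B.cpt X b ∈ Set.Ioo (0 : ℝ) 1) ∧ ∀ d, B.ι d ∈ Set.Ioo (0 : ℝ) 1
set_option linter.unusedSectionVars false

section AbstractMC

variable {α : Type} [Fintype α] [DecidableEq α]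

lemma matIter_zero (P : α → α → ℝ) (γ0 : α → ℝ) : matIter P γ0 0 = γ0 := rfl

lemma matIter_succ' (P : α → α → ℝ) (γ0 : α → ℝ) (n : ℕ) :
    matIter P γ0 (n + 1) = vecMul (matIter P γ0 n) P := rfl

lemma vecMul_nonneg {P : α → α → ℝ} (hP0 : ∀ x y, 0 ≤ P x y) {γ : α → ℝ}
    (hγ : ∀ z, 0 ≤ γ z) (z : α) : 0 ≤ vecMul γ P z :=
  Finset.sum_nonneg fun b _ => mul_nonneg (hγ b) (hP0 b z)

lemma matIter_nonneg {P : α → α → ℝ} (hP0 : ∀ x y, 0 ≤ P x y) {γ0 : α → ℝ}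
    (hγ0 : ∀ z, 0 ≤ γ0 z) : ∀ n z, 0 ≤ matIter P γ0 n z
  | 0, z => hγ0 z
  | n + 1, z => vecMul_nonneg hP0 (matIter_nonneg hP0 hγ0 n) z

lemma sum_vecMul (γ : α → ℝ) (P : α → α → ℝ) :
    ∑ z, vecMul γ P z = ∑ b, γ b * ∑ z, P b z := by
  unfold vecMul
  rw [Finset.sum_comm]
  simp [Finset.mul_sum]

lemma sum_matIter_le {P : α → α → ℝ} (hP0 : ∀ x y, 0 ≤ P x y)
    (hP1 : ∀ x, ∑ y, P x y ≤ 1) {γ0 : α → ℝ} (hγ0 : ∀ z, 0 ≤ γ0 z) :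
    ∀ n, ∑ z, matIter P γ0 n z ≤ ∑ z, γ0 z := by
  intro n
  induction n with
  | zero => exact le_refl _
  | succ n ih =>
    rw [matIter_succ', sum_vecMul]
    refine le_trans (Finset.sum_le_sum fun b _ => (?_ : _ ≤ matIter P γ0 n b)) ih
    exact mul_le_of_le_one_right (matIter_nonneg hP0 hγ0 n b) (hP1 b)

end AbstractMC
section AbstractMC2

variable {α : Type} [Fintype α] [DecidableEq α]

lemma DiracD_nonneg (b z : α) : 0 ≤ DiracD b z := by
  unfold DiracD; split <;> norm_num

lemma sum_DiracD (b : α) : ∑ z, DiracD b z = 1 := by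
  simp [DiracD]

lemma matIter_linear (P : α → α → ℝ) (γ0 : α → ℝ) :
    ∀ n y, matIter P γ0 n y = ∑ x, γ0 x * matIter P (DiracD x) n y := by
  intro n
  induction n with
  | zero => intro y; simp [matIter_zero, DiracD]
  | succ n ih =>
    intro y
    rw [matIter_succ']
    unfold vecMul
    calc ∑ b, matIter P γ0 n b * P b y
        = ∑ b, ∑ x, γ0 x * matIter P (DiracD x) n b * P b y := by
          refine Finset.sum_congr rfl fun b _ => ?_
          rw [ih b, Finset.sum_mul]
      _ = ∑ x, γ0 x * ∑ b, matIter P (DiracD x) n b * P b y := by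
          rw [Finset.sum_comm]
          refine Finset.sum_congr rfl fun x _ => ?_
          rw [Finset.mul_sum]
          exact Finset.sum_congr rfl fun b _ => (mul_assoc _ _ _)
      _ = ∑ x, γ0 x * matIter P (DiracD x) (n + 1) y := rfl

lemma exists_matIter_pos {P : α → α → ℝ} (hP0 : ∀ x y, 0 ≤ P x y) {x y : α}
    (h : MCReach P x y) : ∃ n, 0 < matIter P (DiracD x) n y := by
  induction h with
  | refl => exact ⟨0, by simp [matIter_zero, DiracD]⟩
  | @tail z w hxz hzw ih =>
    obtain ⟨n, hn⟩ := ih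
    refine ⟨n + 1, ?_⟩
    rw [matIter_succ']
    have : 0 < matIter P (DiracD x) n z * P z w := mul_pos hn hzw
    refine lt_of_lt_of_le this ?_
    exact Finset.single_le_sum
      (fun b _ => mul_nonneg (matIter_nonneg hP0 (DiracD_nonneg x) n b) (hP0 b w))
      (Finset.mem_univ z)

lemma stationary_matIter {P : α → α → ℝ} {ξ : α → ℝ} (h : ξ = vecMul ξ P) :
    ∀ n, matIter P ξ n = ξ := by
  intro n
  induction n with
  | zero => rfl
  | succ n ih => rw [matIter_succ', ih, ← h]

/-- positivity propagation along reachability for nonnegative stationary vectors -/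
lemma stationary_pos_of_reach {P : α → α → ℝ} (hP0 : ∀ x y, 0 ≤ P x y) {ξ : α → ℝ}
    (hst : ξ = vecMul ξ P) (hnn : ∀ z, 0 ≤ ξ z) {x y : α} (hx : 0 < ξ x)
    (hr : MCReach P x y) : 0 < ξ y := by
  obtain ⟨n, hn⟩ := exists_matIter_pos hP0 hr
  have h1 : ξ y = ∑ z, ξ z * matIter P (DiracD z) n y := by
    conv_lhs => rw [← stationary_matIter hst n, matIter_linear]
  rw [h1]
  have : 0 < ξ x * matIter P (DiracD x) n y := mul_pos hx hn
  refine lt_of_lt_of_le this ?_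
  exact Finset.single_le_sum
    (fun b _ => mul_nonneg (hnn b) (matIter_nonneg hP0 (DiracD_nonneg b) n y)) (Finset.mem_univ x)

/-- support of a nonnegative stationary vector is closed under reachability -/
lemma supp_closed {P : α → α → ℝ} (hP0 : ∀ x y, 0 ≤ P x y) {γ : α → ℝ}
    (hst : γ = vecMul γ P) (hnn : ∀ z, 0 ≤ γ z) {x y : α} (hx : 0 < γ x)
    (hr : MCReach P x y) : 0 < γ y := stationary_pos_of_reach hP0 hst hnn hx hr

/-- rows sum to 1 on the support of a stationary distribution -/
lemma rowsum_one_of_supp {P : α → α → ℝ} (hP0 : ∀ x y, 0 ≤ P x y)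
    (hP1 : ∀ x, ∑ y, P x y ≤ 1) {γ : α → ℝ} (hst : γ = vecMul γ P)
    (hγ : IsDist γ) {x : α} (hx : 0 < γ x) : ∑ y, P x y = 1 := by
  by_contra hne
  have hlt : ∑ y, P x y < 1 := lt_of_le_of_ne (hP1 x) hne
  have h1 : ∑ z, γ z * ∑ y, P z y < ∑ z, γ z := by
    refine Finset.sum_lt_sum (fun b _ => mul_le_of_le_one_right (hγ.1 b) (hP1 b)) ?_
    exact ⟨x, Finset.mem_univ x, by nlinarith⟩
  have h2 : ∑ z, γ z * ∑ y, P z y = ∑ z, γ z := by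
    conv_rhs => rw [hst, sum_vecMul]
  linarith

end AbstractMC2
section AbstractMC3

variable {α : Type} [Fintype α] [DecidableEq α]

lemma cesaro_const {γ : α → ℝ} (n : ℕ) : cesaro (fun _ : ℕ => γ) n = γ := by
  funext z
  unfold cesaro
  rw [Finset.sum_const, Finset.card_range, nsmul_eq_mul]
  have : ((n : ℝ) + 1) ≠ 0 := by positivity
  push_cast
  field_simp

/-- (a) implies (b): take γ0 = γ. -/
lemma stationary_tendsto_cesaro {P : α → α → ℝ} {γ : α → ℝ} (hst : γ = vecMul γ P) :
    Tendsto (cesaro (matIter P γ)) atTop (nhds γ) := by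
  have h : ∀ n, cesaro (matIter P γ) n = γ := by
    intro n
    have : matIter P γ = fun _ => γ := funext (stationary_matIter hst)
    rw [this, cesaro_const]
  rw [funext h]
  exact tendsto_const_nhds

lemma vecMul_cesaro_matIter (P : α → α → ℝ) (γ0 : α → ℝ) (n : ℕ) (c : α) :
    vecMul (cesaro (matIter P γ0) n) P c =
      cesaro (matIter P γ0) n c + (matIter P γ0 (n + 1) c - γ0 c) / (n + 1) := by
  unfold vecMul cesaro
  have h1 : ∑ b, (∑ i ∈ Finset.range (n + 1), matIter P γ0 i b) / (n + 1) * P b c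
      = ∑ i ∈ Finset.range (n + 1), matIter P γ0 (i + 1) c / (n + 1) := by
    calc ∑ b, (∑ i ∈ Finset.range (n + 1), matIter P γ0 i b) / (n + 1) * P b c
        = ∑ b, ∑ i ∈ Finset.range (n + 1), matIter P γ0 i b * P b c / (n + 1) := by
          refine Finset.sum_congr rfl fun b _ => ?_
          rw [div_mul_eq_mul_div, Finset.sum_mul, Finset.sum_div]
      _ = ∑ i ∈ Finset.range (n + 1), ∑ b, matIter P γ0 i b * P b c / (n + 1) :=
          Finset.sum_comm
      _ = ∑ i ∈ Finset.range (n + 1), matIter P γ0 (i + 1) c / (n + 1) := by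
          refine Finset.sum_congr rfl fun i _ => ?_
          rw [matIter_succ']
          unfold vecMul
          rw [Finset.sum_div]
  rw [h1]
  have h2 : ∑ i ∈ Finset.range (n + 1), matIter P γ0 (i + 1) c
      = ∑ i ∈ Finset.range (n + 1), matIter P γ0 i c + (matIter P γ0 (n + 1) c - γ0 c) := by
    have e1 := Finset.sum_range_succ' (fun i => matIter P γ0 i c) (n + 1)
    have e2 := Finset.sum_range_succ (fun i => matIter P γ0 i c) (n + 1)
    have e3 : matIter P γ0 0 c = γ0 c := rfl
    rw [e3] at e1
    linarith
  rw [← Finset.sum_div, h2]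
  have hne : ((n : ℝ) + 1) ≠ 0 := by positivity
  field_simp

/-- Any Cesàro limit along a subsequence going to infinity is stationary. -/
lemma cesaro_limit_stationary {P : α → α → ℝ} {γ0 : α → ℝ}
    (hb : ∀ n c, |matIter P γ0 n c| ≤ 1) {m : ℕ → ℕ} (hm : Tendsto m atTop atTop)
    {η : α → ℝ} (hlim : Tendsto (fun k => cesaro (matIter P γ0) (m k)) atTop (nhds η)) :
    η = vecMul η P := by
  funext c
  have hcoord : ∀ z, Tendsto (fun k => cesaro (matIter P γ0) (m k) z) atTop (nhds (η z)) :=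
    fun z => tendsto_pi_nhds.mp hlim z
  have hL : Tendsto (fun k => vecMul (cesaro (matIter P γ0) (m k)) P c) atTop
      (nhds (vecMul η P c)) := by
    unfold vecMul
    exact tendsto_finset_sum _ fun b _ => (hcoord b).mul_const (P b c)
  have hcorr : Tendsto (fun k => (matIter P γ0 (m k + 1) c - γ0 c) / (m k + 1)) atTop
      (nhds (0 : ℝ)) := by
    have hg : Tendsto (fun k : ℕ => 2 / ((k : ℝ) + 1)) atTop (nhds 0) := by
      have h := tendsto_const_div_atTop_nhds_zero_nat (2 : ℝ)
      have h2 : Tendsto (fun k : ℕ => k + 1) atTop atTop := tendsto_add_atTop_nat 1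
      have := h.comp h2
      refine this.congr fun k => ?_
      simp only [Function.comp_apply]
      push_cast
      rfl
    refine squeeze_zero_norm (fun k => ?_) (hg.comp hm)
    simp only [Function.comp_apply]
    rw [Real.norm_eq_abs, abs_div]
    have h1 : |matIter P γ0 (m k + 1) c - γ0 c| ≤ 2 := by
      have ha := hb (m k + 1) c
      have hz := hb 0 c
      rw [matIter_zero] at hz
      calc |matIter P γ0 (m k + 1) c - γ0 c| ≤ |matIter P γ0 (m k + 1) c| + |γ0 c| :=
            abs_sub _ _
        _ ≤ 2 := by linarith
    have h2 : (m k : ℝ) + 1 ≤ |(m k : ℝ) + 1| := le_abs_self _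
    exact div_le_div₀ (by norm_num) h1 (by positivity) h2
  have hR : Tendsto (fun k => vecMul (cesaro (matIter P γ0) (m k)) P c) atTop
      (nhds (η c)) := by
    have he : (fun k => vecMul (cesaro (matIter P γ0) (m k)) P c)
        = fun k => cesaro (matIter P γ0) (m k) c +
            (matIter P γ0 (m k + 1) c - γ0 c) / (m k + 1) := by
      funext k; exact vecMul_cesaro_matIter P γ0 (m k) c
    rw [he]
    simpa using (hcoord c).add hcorr
  exact tendsto_nhds_unique hR hL

end AbstractMC3
section AbstractMC4

variable {α : Type} [Fintype α] [DecidableEq α]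

lemma matIter_abs_le_one {P : α → α → ℝ} (hP0 : ∀ x y, 0 ≤ P x y)
    (hP1 : ∀ x, ∑ y, P x y ≤ 1) {γ0 : α → ℝ} (hγ0 : IsDist γ0) (n : ℕ) (c : α) :
    |matIter P γ0 n c| ≤ 1 := by
  have hnn := matIter_nonneg hP0 hγ0.1 n c
  rw [abs_of_nonneg hnn]
  have h1 : matIter P γ0 n c ≤ ∑ z, matIter P γ0 n z :=
    Finset.single_le_sum (fun z _ => matIter_nonneg hP0 hγ0.1 n z) (Finset.mem_univ c)
  have h2 := sum_matIter_le hP0 hP1 hγ0.1 n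
  rw [hγ0.2] at h2
  linarith

/-- (b) implies (a). -/
lemma cesaro_limit_stationary' {P : α → α → ℝ} (hP0 : ∀ x y, 0 ≤ P x y)
    (hP1 : ∀ x, ∑ y, P x y ≤ 1) {γ0 γ : α → ℝ} (hγ0 : IsDist γ0)
    (hlim : Tendsto (cesaro (matIter P γ0)) atTop (nhds γ)) : γ = vecMul γ P :=
  cesaro_limit_stationary (matIter_abs_le_one hP0 hP1 hγ0) tendsto_id hlim

lemma stationary_convex (P : α → α → ℝ) : Convex ℝ {γ : α → ℝ | γ = vecMul γ P} := by
  intro γ1 h1 γ2 h2 a b ha hb hab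
  simp only [Set.mem_setOf_eq] at *
  funext c
  have e1 : (a • γ1 + b • γ2) c = a * γ1 c + b * γ2 c := rfl
  rw [e1]
  unfold vecMul
  have : ∀ z, (a • γ1 + b • γ2) z = a * γ1 z + b * γ2 z := fun _ => rfl
  calc a * γ1 c + b * γ2 c = a * vecMul γ1 P c + b * vecMul γ2 P c := by rw [← h1, ← h2]
    _ = ∑ z, (a • γ1 + b • γ2) z * P z c := by
        unfold vecMul
        rw [Finset.mul_sum, Finset.mul_sum, ← Finset.sum_add_distrib]
        refine Finset.sum_congr rfl fun z _ => ?_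
        rw [this z]; ring

/-! ### BSCC graph lemmas -/

lemma MCReach.trans {P : α → α → ℝ} {x y z : α} (h1 : MCReach P x y) (h2 : MCReach P y z) :
    MCReach P x z := Relation.ReflTransGen.trans h1 h2

lemma bscc_eq_reach {P : α → α → ℝ} {D : Set α} (hD : IsBSCC P D) {x : α} (hx : x ∈ D) :
    D = {y | MCReach P x y} := by
  ext y
  constructor
  · intro hy; exact hD.2.2 x hx y hy
  · intro hy; exact hD.2.1 x hx y hy

lemma bscc_disjoint_or_eq {P : α → α → ℝ} {D D' : Set α} (hD : IsBSCC P D)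
    (hD' : IsBSCC P D') {z : α} (hz : z ∈ D) (hz' : z ∈ D') : D = D' := by
  rw [bscc_eq_reach hD hz, bscc_eq_reach hD' hz']

/-- reachable set as a Finset -/
def RchF (P : α → α → ℝ) (x : α) : Finset α :=
  Finset.univ.filter (fun y => MCReach P x y)

lemma mem_RchF {P : α → α → ℝ} {x y : α} : y ∈ RchF P x ↔ MCReach P x y := by
  simp [RchF]

lemma RchF_subset {P : α → α → ℝ} {x y : α} (h : MCReach P x y) : RchF P y ⊆ RchF P x :=
  fun z hz => mem_RchF.mpr (h.trans (mem_RchF.mp hz))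

/-- every state reaches some BSCC -/
lemma exists_bscc_below (P : α → α → ℝ) (x : α) :
    ∃ y, MCReach P x y ∧ IsBSCC P {z | MCReach P y z} := by
  obtain ⟨y, hy, hmin⟩ := Finset.exists_min_image (RchF P x) (fun z => (RchF P z).card)
    ⟨x, mem_RchF.mpr Relation.ReflTransGen.refl⟩
  refine ⟨y, mem_RchF.mp hy, ⟨⟨y, Relation.ReflTransGen.refl⟩, ?_, ?_⟩⟩
  · intro z hz w hw
    exact Relation.ReflTransGen.trans hz hw
  · intro z hz w hw
    -- z reachable from y; show z reaches y, then z reaches w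
    have hzy : MCReach P z y := by
      have hzx : z ∈ RchF P x := mem_RchF.mpr ((mem_RchF.mp hy).trans hz)
      have hsub : RchF P z ⊆ RchF P y := RchF_subset hz
      have hcard := hmin z hzx
      have heq : RchF P z = RchF P y :=
        Finset.eq_of_subset_of_card_le hsub (by omega)
      have : y ∈ RchF P z := heq ▸ mem_RchF.mpr Relation.ReflTransGen.refl
      exact mem_RchF.mp this
    exact hzy.trans hw

/-- extraction of a leaving edge -/
lemma exists_leaving_edge {P : α → α → ℝ} {S : Set α} {x z : α} (hx : x ∈ S)
    (hr : MCReach P x z) (hz : z ∉ S) : ∃ u ∈ S, ∃ w, w ∉ S ∧ 0 < P u w := by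
  induction hr with
  | refl => exact absurd hx hz
  | @tail b c hab hbc ih =>
    by_cases hb : b ∈ S
    · exact ⟨b, hb, c, hz, hbc⟩
    · exact ih hb

end AbstractMC4
section AbstractMC5

variable {α : Type} [Fintype α] [DecidableEq α]

/-- every point in the support of a stationary distribution lies in a BSCC
(namely its own reachable set) -/
lemma supp_mem_bscc {P : α → α → ℝ} (hP0 : ∀ x y, 0 ≤ P x y)
    (hP1 : ∀ x, ∑ y, P x y ≤ 1) {γ : α → ℝ} (hst : γ = vecMul γ P) (hγ : IsDist γ) :
    ∀ x, 0 < γ x → IsBSCC P {z | MCReach P x z} := by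
  by_contra hbad
  push_neg at hbad
  set Bad : Finset α :=
    Finset.univ.filter (fun x => 0 < γ x ∧ ¬ IsBSCC P {z | MCReach P x z}) with hBadDef
  have hBadNe : Bad.Nonempty := by
    obtain ⟨x, hx1, hx2⟩ := hbad
    exact ⟨x, by simp [hBadDef, hx1, hx2]⟩
  obtain ⟨x, hxBad, hmax⟩ := Finset.exists_max_image Bad (fun z => (RchF P z).card) hBadNe
  have hxBad' : 0 < γ x ∧ ¬ IsBSCC P {z | MCReach P x z} := by
    simpa [hBadDef] using hxBad
  obtain ⟨hγx, hnb⟩ := hxBad'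
  -- the SCC of x
  set S : Finset α :=
    Finset.univ.filter (fun z => MCReach P x z ∧ MCReach P z x) with hSDef
  have hmemS : ∀ z, z ∈ S ↔ MCReach P x z ∧ MCReach P z x := by
    intro z; simp [hSDef]
  have hxS : x ∈ S := (hmemS x).mpr ⟨Relation.ReflTransGen.refl, Relation.ReflTransGen.refl⟩
  -- there is a reachable state not in S
  have hesc : ∃ z, MCReach P x z ∧ z ∉ S := by
    by_contra hno
    push_neg at hno
    apply hnb
    refine ⟨⟨x, Relation.ReflTransGen.refl⟩, fun a ha b hb => ha.trans hb, ?_⟩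
    intro a ha b hb
    have haS := hno a ha
    exact (((hmemS a).mp haS).2).trans hb
  obtain ⟨z, hxz, hzS⟩ := hesc
  obtain ⟨u, huS, w, hwS, hPuw⟩ := exists_leaving_edge (S := (S : Set α)) hxS hxz
    (by simpa using hzS)
  have huS' : u ∈ S := by simpa using huS
  -- γ positive on S
  have hSpos : ∀ s ∈ S, 0 < γ s := fun s hs =>
    supp_closed hP0 hst hγ.1 hγx ((hmemS s).mp hs).1
  -- no inflow into S from outside
  have hinflow : ∀ v, v ∉ S → 0 < γ v → ∀ s ∈ S, P v s = 0 := by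
    intro v hvS hγv s hsS
    by_contra hne
    have hPvs : 0 < P v s := lt_of_le_of_ne (hP0 v s) (Ne.symm hne)
    have hvx : MCReach P v x :=
      (Relation.ReflTransGen.single (r := fun a b => 0 < P a b) hPvs).trans ((hmemS s).mp hsS).2
    have hnxv : ¬ MCReach P x v := fun hxv => hvS ((hmemS v).mpr ⟨hxv, hvx⟩)
    -- v is in Bad or in a BSCC
    by_cases hvb : IsBSCC P {z | MCReach P v z}
    · -- then x ∈ that BSCC, so it equals Rch x, so x reaches v
      have hxmem : x ∈ {z | MCReach P v z} := hvx
      have heq := bscc_eq_reach hvb hxmem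
      have : v ∈ {y | MCReach P x y} := by
        rw [← heq]; exact Relation.ReflTransGen.refl
      exact hnxv this
    · have hvBad : v ∈ Bad := by simp [hBadDef, hγv, hvb]
      have hlt : (RchF P x).card < (RchF P v).card := by
        refine Finset.card_lt_card ⟨RchF_subset hvx, fun hsub => ?_⟩
        exact hnxv (mem_RchF.mp (hsub (mem_RchF.mpr Relation.ReflTransGen.refl)))
      have := hmax v hvBad
      omega
  -- balance equation
  have hbal : ∑ s ∈ S, γ s = ∑ v, γ v * ∑ s ∈ S, P v s := by
    calc ∑ s ∈ S, γ s = ∑ s ∈ S, ∑ v, γ v * P v s := by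
          refine Finset.sum_congr rfl fun s _ => ?_
          conv_lhs => rw [hst]
          rfl
      _ = ∑ v, ∑ s ∈ S, γ v * P v s := Finset.sum_comm
      _ = ∑ v, γ v * ∑ s ∈ S, P v s := by
          refine Finset.sum_congr rfl fun v _ => ?_
          rw [Finset.mul_sum]
  have houter : ∑ v, γ v * ∑ s ∈ S, P v s = ∑ v ∈ S, γ v * ∑ s ∈ S, P v s := by
    rw [← Finset.sum_filter_add_sum_filter_not Finset.univ (fun v => v ∈ S)]
    have hzero : ∑ v ∈ Finset.univ.filter (fun v => v ∉ S), γ v * ∑ s ∈ S, P v s = 0 := by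
      refine Finset.sum_eq_zero fun v hv => ?_
      have hvS : v ∉ S := (Finset.mem_filter.mp hv).2
      rcases lt_or_eq_of_le (hγ.1 v) with hpos | hzero
      · have := hinflow v hvS hpos
        have : ∑ s ∈ S, P v s = 0 := Finset.sum_eq_zero fun s hs => this s hs
        rw [this, mul_zero]
      · rw [← hzero, zero_mul]
    rw [hzero, add_zero]
    exact Finset.sum_congr (by ext v; simp) (fun _ _ => rfl)
  have hstrict : ∑ v ∈ S, γ v * ∑ s ∈ S, P v s < ∑ s ∈ S, γ s := by
    refine Finset.sum_lt_sum (fun v hv => ?_) ⟨u, huS', ?_⟩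
    · refine mul_le_of_le_one_right (le_of_lt (hSpos v hv)) ?_
      refine le_trans (Finset.sum_le_sum_of_subset_of_nonneg (Finset.subset_univ S)
        (fun y _ _ => hP0 v y)) (hP1 v)
    · have hle : ∑ s ∈ S, P u s + P u w ≤ 1 := by
        have : ∑ s ∈ insert w S, P u s ≤ ∑ y, P u y :=
          Finset.sum_le_sum_of_subset_of_nonneg (Finset.subset_univ _)
            (fun y _ _ => hP0 u y)
        rw [Finset.sum_insert (by simpa using hwS)] at this
        have := le_trans this (hP1 u)
        linarith
      have h1 : ∑ s ∈ S, P u s < 1 := by linarith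
      have := hSpos u huS'
      nlinarith
  rw [hbal, houter] at *
  exact lt_irrefl _ hstrict

end AbstractMC5
section AbstractMC6

variable {α : Type} [Fintype α] [DecidableEq α]

/-- the restriction of a stationary distribution to a BSCC is stationary -/
lemma restrict_stationary {P : α → α → ℝ} (hP0 : ∀ x y, 0 ≤ P x y)
    (hP1 : ∀ x, ∑ y, P x y ≤ 1) {γ : α → ℝ} (hst : γ = vecMul γ P) (hγ : IsDist γ)
    {D : Set α} (hD : IsBSCC P D) :
    (fun z => if z ∈ D then γ z else 0) =
      vecMul (fun z => if z ∈ D then γ z else 0) P := by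
  funext z
  by_cases hz : z ∈ D
  · have key : ∀ v, (if v ∈ D then γ v else 0) * P v z = γ v * P v z := by
      intro v
      by_cases hv : v ∈ D
      · rw [if_pos hv]
      · rw [if_neg hv]
        rcases lt_or_eq_of_le (hγ.1 v) with hγv | hγv
        · rcases lt_or_eq_of_le (hP0 v z) with hPvz | hPvz
          · exfalso
            have hvb := supp_mem_bscc hP0 hP1 hst hγ v hγv
            have hzv : z ∈ {w | MCReach P v w} :=
              Relation.ReflTransGen.single (r := fun a b => 0 < P a b) hPvz
            have heq := bscc_disjoint_or_eq hvb hD hzv hz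
            exact hv (heq ▸ (Relation.ReflTransGen.refl : MCReach P v v))
          · simp [← hPvz]
        · simp [← hγv]
    rw [if_pos hz]
    unfold vecMul
    rw [Finset.sum_congr rfl (fun v _ => key v)]
    conv_lhs => rw [hst]
    rfl
  · rw [if_neg hz]
    unfold vecMul
    symm
    refine Finset.sum_eq_zero fun v _ => ?_
    by_cases hv : v ∈ D
    · have h0 : P v z = 0 := by
        by_contra hne
        have hPvz : 0 < P v z := lt_of_le_of_ne (hP0 v z) (Ne.symm hne)
        exact hz (hD.2.1 v hv z
          (Relation.ReflTransGen.single (r := fun a b => 0 < P a b) hPvz))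
      simp [h0]
    · simp [hv]

/-- uniqueness of the stationary distribution supported on a BSCC -/
lemma stationary_unique_on_bscc {P : α → α → ℝ} (hP0 : ∀ x y, 0 ≤ P x y)
    {D : Set α} (hD : IsBSCC P D) {ν : α → ℝ}
    (hνst : ν = vecMul ν P) (hνd : IsDist ν) (hνsupp : ∀ z, z ∉ D → ν z = 0)
    (hνpos : ∀ z ∈ D, 0 < ν z) {η : α → ℝ}
    (hηst : η = vecMul η P) (hηnn : ∀ z, 0 ≤ η z) (hηsum : ∑ z, η z = 1)
    (hηsupp : ∀ z, z ∉ D → η z = 0) : η = ν := by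
  set Df : Finset α := Finset.univ.filter (fun z => z ∈ D) with hDf
  have hmemDf : ∀ z, z ∈ Df ↔ z ∈ D := by intro z; simp [hDf]
  have hDfNe : Df.Nonempty := by
    obtain ⟨d, hd⟩ := hD.1
    exact ⟨d, (hmemDf d).mpr hd⟩
  obtain ⟨z0, hz0, hmin⟩ := Finset.exists_min_image Df (fun z => η z / ν z) hDfNe
  have hz0D : z0 ∈ D := (hmemDf z0).mp hz0
  set c : ℝ := η z0 / ν z0 with hc
  set ξ : α → ℝ := fun z => η z - c * ν z with hξ
  have hξst : ξ = vecMul ξ P := by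
    funext z
    have : vecMul ξ P z = vecMul η P z - c * vecMul ν P z := by
      unfold vecMul
      rw [Finset.mul_sum, ← Finset.sum_sub_distrib]
      refine Finset.sum_congr rfl fun v _ => ?_
      simp only [hξ]; ring
    rw [this, ← hηst, ← hνst]
  have hξnn : ∀ z, 0 ≤ ξ z := by
    intro z
    by_cases hz : z ∈ D
    · have h1 : c ≤ η z / ν z := hmin z ((hmemDf z).mpr hz)
      have h2 : 0 < ν z := hνpos z hz
      simp only [hξ]
      have h3 : c * ν z ≤ η z := (le_div_iff₀ h2).mp h1
      linarith
    · simp only [hξ]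
      rw [hηsupp z hz, hνsupp z hz, mul_zero, sub_zero]
  have hξz0 : ξ z0 = 0 := by
    have hν0 : ν z0 ≠ 0 := ne_of_gt (hνpos z0 hz0D)
    simp only [hξ, hc]
    field_simp
    ring
  have hξzero : ∀ z, ξ z = 0 := by
    intro z
    rcases lt_or_eq_of_le (hξnn z) with hpos | heq
    · exfalso
      have hzD : z ∈ D := by
        by_contra hzD
        have : ξ z = 0 := by
          simp only [hξ]
          rw [hηsupp z hzD, hνsupp z hzD, mul_zero, sub_zero]
        linarith
      have hreach : MCReach P z z0 := hD.2.2 z hzD z0 hz0D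
      have := stationary_pos_of_reach hP0 hξst hξnn hpos hreach
      linarith
    · linarith
  have hηeq : ∀ z, η z = c * ν z := by
    intro z
    have := hξzero z
    simp only [hξ] at this
    linarith
  have hcsum : (1 : ℝ) = c * 1 := by
    calc (1 : ℝ) = ∑ z, η z := hηsum.symm
      _ = ∑ z, c * ν z := Finset.sum_congr rfl fun z _ => hηeq z
      _ = c * ∑ z, ν z := by rw [Finset.mul_sum]
      _ = c * 1 := by rw [hνd.2]
  have hc1 : c = 1 := by linarith
  funext z
  rw [hηeq z, hc1, one_mul]

end AbstractMC6
section AbstractMC7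

variable {α : Type} [Fintype α] [DecidableEq α]

lemma DiracD_isDist (x : α) : IsDist (DiracD x) := ⟨DiracD_nonneg x, sum_DiracD x⟩

/-- Cesàro convergence from a Dirac initial distribution inside a BSCC with
stochastic rows, towards the unique stationary distribution of the BSCC. -/
lemma tendsto_cesaro_dirac {P : α → α → ℝ} (hP0 : ∀ x y, 0 ≤ P x y)
    (hP1 : ∀ x, ∑ y, P x y ≤ 1) {D : Set α} (hD : IsBSCC P D)
    (hrow : ∀ z ∈ D, ∑ y, P z y = 1) {x : α} (hx : x ∈ D) {ν : α → ℝ}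
    (hνst : ν = vecMul ν P) (hνd : IsDist ν) (hνsupp : ∀ z, z ∉ D → ν z = 0)
    (hνpos : ∀ z ∈ D, 0 < ν z) :
    Tendsto (cesaro (matIter P (DiracD x))) atTop (nhds ν) := by
  set μ : ℕ → α → ℝ := matIter P (DiracD x) with hμ
  have hμnn : ∀ n z, 0 ≤ μ n z := matIter_nonneg hP0 (DiracD_nonneg x)
  have hμsupp : ∀ n z, z ∉ D → μ n z = 0 := by
    intro n
    induction n with
    | zero =>
      intro z hz
      have : z ≠ x := fun h => hz (h ▸ hx)
      simp [hμ, matIter_zero, DiracD, this]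
    | succ n ih =>
      intro z hz
      have : μ (n + 1) z = ∑ v, μ n v * P v z := rfl
      rw [this]
      refine Finset.sum_eq_zero fun v _ => ?_
      by_cases hv : v ∈ D
      · have : P v z = 0 := by
          by_contra hne
          exact hz (hD.2.1 v hv z (Relation.ReflTransGen.single
            (r := fun a b => 0 < P a b) (lt_of_le_of_ne (hP0 v z) (Ne.symm hne))))
        rw [this, mul_zero]
      · rw [ih v hv, zero_mul]
  have hμsum : ∀ n, ∑ z, μ n z = 1 := by
    intro n
    induction n with
    | zero => exact sum_DiracD x
    | succ n ih =>
      have h1 : ∑ z, μ (n + 1) z = ∑ v, μ n v * ∑ z, P v z := sum_vecMul _ _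
      rw [h1, ← ih]
      refine Finset.sum_congr rfl fun v _ => ?_
      by_cases hv : v ∈ D
      · rw [hrow v hv, mul_one]
      · rw [hμsupp n v hv, zero_mul]
  have hμle : ∀ n z, μ n z ≤ 1 := by
    intro n z
    have := Finset.single_le_sum (fun w _ => hμnn n w) (Finset.mem_univ z)
    rw [hμsum n] at this
    exact this
  set a : ℕ → α → ℝ := cesaro μ with ha
  have haIcc : ∀ n z, a n z ∈ Set.Icc (0 : ℝ) 1 := by
    intro n z
    simp only [ha, cesaro]
    constructor
    · exact div_nonneg (Finset.sum_nonneg fun i _ => hμnn i z) (by positivity)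
    · rw [div_le_one (by positivity)]
      calc ∑ i ∈ Finset.range (n + 1), μ i z ≤ ∑ i ∈ Finset.range (n + 1), 1 :=
            Finset.sum_le_sum fun i _ => hμle i z
        _ = (n : ℝ) + 1 := by rw [Finset.sum_const, Finset.card_range]; push_cast; ring
  have hasupp : ∀ n z, z ∉ D → a n z = 0 := by
    intro n z hz
    have : ∑ i ∈ Finset.range (n + 1), μ i z = 0 :=
      Finset.sum_eq_zero fun i _ => hμsupp i z hz
    simp [ha, cesaro, this]
  have hasum : ∀ n, ∑ z, a n z = 1 := by
    intro n
    have h1 : ∑ z, a n z = (∑ i ∈ Finset.range (n + 1), ∑ z, μ i z) / (n + 1) := by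
      simp only [ha, cesaro]
      rw [← Finset.sum_div]
      congr 1
      exact Finset.sum_comm
    rw [h1]
    have h2 : ∑ i ∈ Finset.range (n + 1), ∑ z, μ i z = (n : ℝ) + 1 := by
      rw [Finset.sum_congr rfl fun i _ => hμsum i, Finset.sum_const, Finset.card_range]
      push_cast; ring
    rw [h2]
    field_simp
  -- subsequence argument
  refine tendsto_of_subseq_tendsto fun ns hns => ?_
  have hK : IsCompact (Set.univ.pi fun _ : α => Set.Icc (0 : ℝ) 1) :=
    isCompact_univ_pi fun _ => isCompact_Icc
  have hmem : ∀ k, a (ns k) ∈ Set.univ.pi fun _ : α => Set.Icc (0 : ℝ) 1 :=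
    fun k => fun z _ => haIcc (ns k) z
  obtain ⟨η, hηK, φ, hφ, hηlim⟩ := hK.tendsto_subseq hmem
  set m : ℕ → ℕ := ns ∘ φ with hm
  have hmtop : Tendsto m atTop atTop := hns.comp hφ.tendsto_atTop
  have hηlim' : Tendsto (fun k => a (m k)) atTop (nhds η) := hηlim
  have hcoord : ∀ z, Tendsto (fun k => a (m k) z) atTop (nhds (η z)) :=
    fun z => tendsto_pi_nhds.mp hηlim' z
  -- η is stationary
  have hηst : η = vecMul η P :=
    cesaro_limit_stationary (matIter_abs_le_one hP0 hP1 (DiracD_isDist x)) hmtop hηlim'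
  -- η is nonnegative
  have hηnn : ∀ z, 0 ≤ η z := fun z => (hηK z (Set.mem_univ z)).1
  -- η is supported on D
  have hηsupp : ∀ z, z ∉ D → η z = 0 := by
    intro z hz
    have h1 : Tendsto (fun k => a (m k) z) atTop (nhds 0) := by
      have : (fun k => a (m k) z) = fun _ => (0 : ℝ) :=
        funext fun k => hasupp (m k) z hz
      rw [this]; exact tendsto_const_nhds
    exact tendsto_nhds_unique (hcoord z) h1
  -- η sums to 1
  have hηsum : ∑ z, η z = 1 := by
    have h1 : Tendsto (fun k => ∑ z, a (m k) z) atTop (nhds (∑ z, η z)) :=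
      tendsto_finset_sum _ fun z _ => hcoord z
    have h2 : Tendsto (fun k => ∑ z, a (m k) z) atTop (nhds 1) := by
      have : (fun k => ∑ z, a (m k) z) = fun _ => (1 : ℝ) :=
        funext fun k => hasum (m k)
      rw [this]; exact tendsto_const_nhds
    exact tendsto_nhds_unique h1 h2
  have : η = ν := stationary_unique_on_bscc hP0 hD hνst hνd hνsupp hνpos hηst hηnn hηsum hηsupp
  exact ⟨φ, this ▸ hηlim'⟩

end AbstractMC7
section AbstractMC8

variable {α : Type} [Fintype α] [DecidableEq α]

/-- The main abstract theorem about finite substochastic chains. -/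
theorem abstract_stmt {P : α → α → ℝ} (hP0 : ∀ x y, 0 ≤ P x y)
    (hP1 : ∀ x, ∑ y, P x y ≤ 1) {γ : α → ℝ} (hγ : IsDist γ) :
    ((γ = vecMul γ P) ↔
      (∃ γ0 : α → ℝ, IsDist γ0 ∧ Tendsto (cesaro (matIter P γ0)) atTop (nhds γ))) ∧
    ((γ = vecMul γ P) ↔
      γ ∈ convexHull ℝ { ν : α → ℝ | ∃ D : Set α, ∃ x ∈ D, IsBSCC P D ∧
        Tendsto (cesaro (matIter P (DiracD x))) atTop (nhds ν) }) := by
  set S : Set (α → ℝ) := { ν : α → ℝ | ∃ D : Set α, ∃ x ∈ D, IsBSCC P D ∧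
    Tendsto (cesaro (matIter P (DiracD x))) atTop (nhds ν) } with hS
  constructor
  · constructor
    · intro hst
      exact ⟨γ, hγ, stationary_tendsto_cesaro hst⟩
    · rintro ⟨γ0, hγ0, hlim⟩
      exact cesaro_limit_stationary' hP0 hP1 hγ0 hlim
  constructor
  · -- (a) → (c)
    intro hst
    set W : Finset α := Finset.univ.filter (fun z => 0 < γ z) with hW
    have hmemW : ∀ z, z ∈ W ↔ 0 < γ z := by intro z; simp [hW]
    set ℬ : Finset (Finset α) := W.image (fun x => RchF P x) with hB
    -- every element of ℬ is a BSCC whose elements are all in the support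
    have hBfact : ∀ b ∈ ℬ, IsBSCC P (↑b : Set α) ∧ ∀ z ∈ b, 0 < γ z := by
      intro b hb
      obtain ⟨x, hxW, hxb⟩ := Finset.mem_image.mp hb
      have hγx : 0 < γ x := (hmemW x).mp hxW
      have hbscc := supp_mem_bscc hP0 hP1 hst hγ x hγx
      have hcoe : (↑b : Set α) = {z | MCReach P x z} := by
        rw [← hxb]; ext z; simp [RchF]
      refine ⟨hcoe ▸ hbscc, fun z hz => ?_⟩
      have : MCReach P x z := by
        have : z ∈ (↑b : Set α) := hz
        rwa [hcoe] at this
      exact supp_closed hP0 hst hγ.1 hγx this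
    -- unique b containing a support point
    have hBuniq : ∀ z, 0 < γ z → ∀ b ∈ ℬ, z ∈ b → b = RchF P z := by
      intro z hz b hb hzb
      have hbscc := (hBfact b hb).1
      have := bscc_eq_reach hbscc (show z ∈ (↑b : Set α) from hzb)
      ext y
      constructor
      · intro hy
        have h1 : y ∈ (↑b : Set α) := hy
        rw [this] at h1
        exact mem_RchF.mpr h1
      · intro hy
        have h1 : y ∈ {w | MCReach P z w} := mem_RchF.mp hy
        rw [← this] at h1
        exact h1
    have hRchB : ∀ z, 0 < γ z → RchF P z ∈ ℬ ∧ z ∈ RchF P z := by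
      intro z hz
      exact ⟨Finset.mem_image_of_mem _ ((hmemW z).mpr hz),
        mem_RchF.mpr Relation.ReflTransGen.refl⟩
    -- pairwise disjointness
    have hdisj : ∀ b ∈ ℬ, ∀ b' ∈ ℬ, b ≠ b' → ∀ z, z ∈ b → z ∉ b' := by
      intro b hb b' hb' hne z hzb hzb'
      apply hne
      have h1 := bscc_disjoint_or_eq (hBfact b hb).1 (hBfact b' hb').1
        (show z ∈ (↑b : Set α) from hzb) (show z ∈ (↑b' : Set α) from hzb')
      exact Finset.coe_injective h1
    -- weights
    set lam : Finset α → ℝ := fun b => ∑ z ∈ b, γ z with hlam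
    have hlampos : ∀ b ∈ ℬ, 0 < lam b := by
      intro b hb
      obtain ⟨x, hxW, hxb⟩ := Finset.mem_image.mp hb
      refine Finset.sum_pos' (fun z hz => hγ.1 z) ⟨x, ?_, (hmemW x).mp hxW⟩
      rw [← hxb]; exact mem_RchF.mpr Relation.ReflTransGen.refl
    -- points
    set ν : Finset α → α → ℝ :=
      fun b z => (if z ∈ b then γ z else 0) / lam b with hν
    have hνfacts : ∀ b ∈ ℬ, ν b = vecMul (ν b) P ∧ IsDist (ν b) ∧
        (∀ z, z ∉ b → ν b z = 0) ∧ (∀ z ∈ b, 0 < ν b z) := by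
      intro b hb
      have hpos := hlampos b hb
      have hρ := restrict_stationary hP0 hP1 hst hγ (D := (↑b : Set α)) (hBfact b hb).1
      have hρ' : (fun z => if z ∈ b then γ z else 0) =
          vecMul (fun z => if z ∈ b then γ z else 0) P := by
        convert hρ using 2 <;> simp
      have hsum : ∑ z, ν b z = 1 := by
        simp only [hν]
        rw [← Finset.sum_div]
        rw [Finset.sum_ite_mem, Finset.univ_inter]
        field_simp
        rfl
      refine ⟨?_, ⟨fun z => ?_, hsum⟩, fun z hz => ?_, fun z hz => ?_⟩
      · funext z
        have : vecMul (ν b) P z =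
            (∑ v, (if v ∈ b then γ v else 0) * P v z) / lam b := by
          unfold vecMul
          rw [Finset.sum_div]
          refine Finset.sum_congr rfl fun v _ => ?_
          simp only [hν]; ring
        rw [this]
        have h2 : ∑ v, (if v ∈ b then γ v else 0) * P v z =
            (if z ∈ b then γ z else 0) := (congrFun hρ' z).symm
        rw [h2]
      · simp only [hν]
        have : 0 ≤ (if z ∈ b then γ z else 0) := by
          split
          · exact hγ.1 z
          · exact le_refl 0
        exact div_nonneg this (le_of_lt hpos)
      · simp only [hν, if_neg hz, zero_div]
      · simp only [hν, if_pos hz]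
        exact div_pos ((hBfact b hb).2 z hz) hpos
    -- sum of weights is 1
    have hWsum : ∑ b ∈ ℬ, lam b = 1 := by
      have hbu : ℬ.biUnion id = W := by
        ext z
        simp only [Finset.mem_biUnion, id]
        constructor
        · rintro ⟨b, hb, hzb⟩
          exact (hmemW z).mpr ((hBfact b hb).2 z hzb)
        · intro hz
          obtain ⟨h1, h2⟩ := hRchB z ((hmemW z).mp hz)
          exact ⟨RchF P z, h1, h2⟩
      have hpw : ∀ b ∈ ℬ, ∀ b' ∈ ℬ, b ≠ b' → Disjoint b b' := by
        intro b hb b' hb' hne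
        rw [Finset.disjoint_left]
        exact fun z hz => hdisj b hb b' hb' hne z hz
      have hsb := Finset.sum_biUnion (f := γ) (s := ℬ) (t := id) hpw
      rw [hbu] at hsb
      simp only [id] at hsb
      show ∑ b ∈ ℬ, ∑ z ∈ b, γ z = 1
      rw [← hsb]
      have : ∑ z ∈ W, γ z = ∑ z, γ z := by
        refine Finset.sum_subset (Finset.subset_univ W) fun z _ hz => ?_
        rcases lt_or_eq_of_le (hγ.1 z) with h | h
        · exact absurd ((hmemW z).mpr h) hz
        · exact h.symm
      rw [this, hγ.2]
    -- γ is the convex combination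
    have hcomb : γ = ∑ b ∈ ℬ, lam b • ν b := by
      funext z
      rw [Finset.sum_apply]
      by_cases hz : 0 < γ z
      · obtain ⟨hb0, hzb0⟩ := hRchB z hz
        rw [Finset.sum_eq_single (RchF P z)]
        · simp only [Pi.smul_apply, smul_eq_mul, hν, if_pos hzb0]
          field_simp [ne_of_gt (hlampos _ hb0)]
        · intro b hb hne
          have hzb : z ∉ b := by
            intro hzb
            exact hne (hBuniq z hz b hb hzb)
          simp only [Pi.smul_apply, smul_eq_mul, hν, if_neg hzb, zero_div, mul_zero]
        · intro h
          exact absurd hb0 h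
      · have hz0 : γ z = 0 := by
          rcases lt_or_eq_of_le (hγ.1 z) with h | h
          · exact absurd h hz
          · exact h.symm
        rw [hz0]
        symm
        refine Finset.sum_eq_zero fun b hb => ?_
        simp only [Pi.smul_apply, smul_eq_mul, hν]
        by_cases hzb : z ∈ b
        · rw [if_pos hzb, hz0, zero_div, mul_zero]
        · rw [if_neg hzb, zero_div, mul_zero]
    have hνS : ∀ b ∈ ℬ, ν b ∈ S := by
      intro b hb
      obtain ⟨hstb, hdb, hsuppb, hposb⟩ := hνfacts b hb
      obtain ⟨x, hxW, hxb⟩ := Finset.mem_image.mp hb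
      have hγx : 0 < γ x := (hmemW x).mp hxW
      have hxinb : x ∈ b := by rw [← hxb]; exact mem_RchF.mpr Relation.ReflTransGen.refl
      refine ⟨(↑b : Set α), x, hxinb, (hBfact b hb).1, ?_⟩
      refine tendsto_cesaro_dirac hP0 hP1 (hBfact b hb).1 ?_ hxinb hstb hdb
        (fun z hz => hsuppb z hz) (fun z hz => hposb z hz)
      intro z hz
      exact rowsum_one_of_supp hP0 hP1 hst hγ ((hBfact b hb).2 z hz)
    rw [hcomb]
    exact Convex.sum_mem (convex_convexHull ℝ S) (fun b hb => le_of_lt (hlampos b hb))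
      hWsum (fun b hb => subset_convexHull ℝ S (hνS b hb))
  · -- (c) → (a)
    intro hmem
    have hsub : S ⊆ {ξ : α → ℝ | ξ = vecMul ξ P} := by
      rintro ξ ⟨D, x, hx, hD, hlim⟩
      exact cesaro_limit_stationary' hP0 hP1 (DiracD_isDist x) hlim
    exact convexHull_min hsub (stationary_convex P) hmem
end AbstractMC8
section GBNpart

variable {V : Type} [Fintype V] [DecidableEq V]

lemma distDissect_linear (B : GBN V) (C : Finset V) (γ : Asg C → ℝ)
    (b : V → Bool) (c : Asg C) :
    distDissect B C γ b c = ∑ d : Asg C, γ d * distDissect B C (DiracD d) b c := by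
  unfold distDissect DiracD
  rw [Finset.sum_eq_single (fun x : {x // x ∈ C} => b x.1)]
  · rw [if_pos rfl]
    ring
  · intro d _ hne
    rw [if_neg (fun h => hne h.symm)]
    ring
  · intro h
    exact absurd (Finset.mem_univ _) h

set_option maxHeartbeats 2000000 in
lemma Next_linear (B : GBN V) (C : Finset V) (γ : Asg C → ℝ) (a : V → Bool) :
    Next B C γ a = ∑ d : Asg C, γ d * Next B C (DiracD d) a := by
  unfold Next
  calc (∑ b : V → Bool, if ∀ x : V, x ∉ C → b x = a x then
          distDissect B C γ b (fun y => a y.1) else 0)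
      = ∑ b : V → Bool, ∑ d : Asg C, γ d * (if ∀ x : V, x ∉ C → b x = a x then
          distDissect B C (DiracD d) b (fun y => a y.1) else 0) := by
        refine Finset.sum_congr rfl fun b _ => ?_
        by_cases h : ∀ x : V, x ∉ C → b x = a x
        · rw [if_pos h, distDissect_linear]
          refine Finset.sum_congr rfl fun d _ => ?_
          rw [if_pos h]
        · rw [if_neg h]
          symm
          refine Finset.sum_eq_zero fun d _ => ?_
          rw [if_neg h, mul_zero]
    _ = ∑ d : Asg C, ∑ b : V → Bool, γ d * (if ∀ x : V, x ∉ C → b x = a x then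
          distDissect B C (DiracD d) b (fun y => a y.1) else 0) := Finset.sum_comm
    _ = ∑ d : Asg C, γ d * ∑ b : V → Bool, (if ∀ x : V, x ∉ C → b x = a x then
          distDissect B C (DiracD d) b (fun y => a y.1) else 0) := by
        exact Finset.sum_congr rfl fun d _ => (Finset.mul_sum _ _ _).symm

set_option maxHeartbeats 2000000 in
lemma probIf_Next_linear (B : GBN V) (C : Finset V) (γ : Asg C → ℝ)
    (p : (V → Bool) → Prop) :
    probIf (Next B C γ) p = ∑ e : Asg C, γ e * probIf (Next B C (DiracD e)) p := by
  unfold probIf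
  calc (∑ a : V → Bool, if p a then Next B C γ a else 0)
      = ∑ a : V → Bool, ∑ e : Asg C,
          γ e * (if p a then Next B C (DiracD e) a else 0) := by
        refine Finset.sum_congr rfl fun a _ => ?_
        by_cases h : p a
        · rw [if_pos h, Next_linear]
          refine Finset.sum_congr rfl fun e _ => ?_
          rw [if_pos h]
        · rw [if_neg h]
          symm
          refine Finset.sum_eq_zero fun e _ => ?_
          rw [if_neg h, mul_zero]
    _ = ∑ e : Asg C, ∑ a : V → Bool,
          γ e * (if p a then Next B C (DiracD e) a else 0) := Finset.sum_comm
    _ = ∑ e : Asg C, γ e * ∑ a : V → Bool,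
          (if p a then Next B C (DiracD e) a else 0) := by
        exact Finset.sum_congr rfl fun e _ => (Finset.mul_sum _ _ _).symm

lemma marginal_Next_eq_vecMul (B : GBN V) (C : Finset V) (γ : Asg C → ℝ) :
    marginal (Next B C γ) C = vecMul γ (cutsetP B C) := by
  funext d
  show probIf (Next B C γ) (fun b => Agrees b C d) = _
  rw [probIf_Next_linear]
  rfl

lemma copyProb_nonneg (B : GBN V) (X : V) (v : Bool) (b : V → Bool) :
    0 ≤ copyProb B X v b := by
  unfold copyProb
  split
  · exact B.cpt_nonneg X _
  · linarith [B.cpt_le_one X (fun p : {p // p ∈ Pre B.edges X} => b p.1)]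

lemma sum_copyProb (B : GBN V) (X : V) (b : V → Bool) :
    ∑ v : Bool, copyProb B X v b = 1 := by
  rw [Fintype.sum_bool]
  unfold copyProb
  simp

lemma distDissect_nonneg (B : GBN V) (C : Finset V) {γ : Asg C → ℝ}
    (hγ : ∀ e, 0 ≤ γ e) (b : V → Bool) (c : Asg C) :
    0 ≤ distDissect B C γ b c := by
  unfold distDissect
  refine mul_nonneg (mul_nonneg (mul_nonneg (B.ι_dist.1 _) (hγ _)) ?_) ?_
  · exact Finset.prod_nonneg fun X _ => copyProb_nonneg B X _ b
  · exact Finset.prod_nonneg fun Y _ => copyProb_nonneg B Y.1 _ b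

lemma cutsetP_nonneg (B : GBN V) (C : Finset V) (b c : Asg C) :
    0 ≤ cutsetP B C b c := by
  unfold cutsetP marginal probIf
  refine Finset.sum_nonneg fun a _ => ?_
  split
  · unfold Next
    refine Finset.sum_nonneg fun b' _ => ?_
    split
    · exact distDissect_nonneg B C (DiracD_nonneg b) b' _
    · exact le_refl 0
  · exact le_refl 0

set_option maxHeartbeats 2000000 in
/-- summing a marginal over all cutset assignments gives the total mass -/
lemma sum_marginal (μ : (V → Bool) → ℝ) (C : Finset V) :
    ∑ d : Asg C, marginal μ C d = ∑ a : V → Bool, μ a := by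
  unfold marginal probIf
  rw [Finset.sum_comm]
  refine Finset.sum_congr rfl fun a _ => ?_
  beta_reduce
  have h : ∀ d : Asg C, Agrees a C d ↔ d = (fun x : {x // x ∈ C} => a x.1) := by
    intro d
    constructor
    · intro h; funext x; exact (h x).symm
    · intro h x; rw [h]
  rw [Finset.sum_eq_single (fun x : {x // x ∈ C} => a x.1)]
  · rw [if_pos (show Agrees a C _ from fun x => rfl)]
  · intro d _ hne
    rw [if_neg (fun hag => hne (((h d).mp hag).symm ▸ rfl))]
  · intro hx
    exact absurd (Finset.mem_univ _) hx

/-- summing the joint dissected distribution over the copy assignments -/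
lemma sum_distDissect_copies (B : GBN V) (C : Finset V) (γ : Asg C → ℝ) (b : V → Bool) :
    ∑ c : Asg C, distDissect B C γ b c =
      B.ι (fun x => b x.1) * γ (fun x => b x.1) *
        ∏ X ∈ (Finset.univ \ InitSet B.edges) \ C, copyProb B X (b X) b := by
  unfold distDissect
  rw [← Finset.mul_sum]
  have h : ∑ c : Asg C, ∏ Y ∈ C.attach, copyProb B Y.1 (c Y) b = 1 := by
    have h2 : ∀ c : Asg C, ∏ Y ∈ C.attach, copyProb B Y.1 (c Y) b =
        ∏ Y : {x // x ∈ C}, copyProb B Y.1 (c Y) b := by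
      intro c
      rw [← Finset.univ_eq_attach]
    rw [Finset.sum_congr rfl fun c _ => h2 c]
    have h3 := Finset.prod_univ_sum (fun _ : {x // x ∈ C} => (Finset.univ : Finset Bool))
      (fun Y v => copyProb B Y.1 v b)
    rw [Fintype.piFinset_univ] at h3
    rw [← h3]
    rw [Finset.prod_congr rfl fun Y _ => sum_copyProb B Y.1 b]
    simp
  rw [h, mul_one]

/-- total mass of `Next` -/
lemma sum_Next (B : GBN V) (C : Finset V) (γ : Asg C → ℝ) :
    ∑ a : V → Bool, Next B C γ a =
      ∑ b : V → Bool, ∑ c : Asg C, distDissect B C γ b c := by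
  unfold Next
  rw [Finset.sum_comm]
  refine Finset.sum_congr rfl fun b _ => ?_
  calc (∑ a : V → Bool, if ∀ x : V, x ∉ C → b x = a x then
          distDissect B C γ b (fun y => a y.1) else 0)
      = ∑ a ∈ Finset.univ.filter (fun a : V → Bool => ∀ x : V, x ∉ C → b x = a x),
          distDissect B C γ b (fun y => a y.1) := (Finset.sum_filter _ _).symm
    _ = ∑ c : Asg C, distDissect B C γ b c := by
        refine Finset.sum_nbij' (i := fun a => (fun y : {x // x ∈ C} => a y.1))
          (j := fun c => (fun x => if h : x ∈ C then c ⟨x, h⟩ else b x))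
          (fun a _ => Finset.mem_univ _) ?_ ?_ ?_ ?_
        · intro c _
          rw [Finset.mem_filter]
          refine ⟨Finset.mem_univ _, fun x hx => ?_⟩
          beta_reduce
          rw [dif_neg hx]
        · intro a ha
          rw [Finset.mem_filter] at ha
          funext x
          beta_reduce
          by_cases hx : x ∈ C
          · rw [dif_pos hx]
          · rw [dif_neg hx]
            exact ha.2 x hx
        · intro c _
          funext y
          beta_reduce
          rw [dif_pos y.2]
        · intro a _
          rfl

end GBNpart
section GBNpart2

variable {V : Type} [Fintype V] [DecidableEq V]

lemma mem_Pre {E : Finset (V × V)} {x y : V} : x ∈ Pre E y ↔ (x, y) ∈ E := by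
  unfold Pre
  simp only [Finset.mem_image, Finset.mem_filter]
  constructor
  · rintro ⟨e, ⟨he, h2⟩, h1⟩
    have : e = (x, y) := Prod.ext h1 h2
    rwa [this] at he
  · intro h
    exact ⟨(x, y), ⟨h, rfl⟩, rfl⟩

lemma copyProb_congr (B : GBN V) (X : V) (v : Bool) {b b' : V → Bool}
    (h : ∀ p ∈ Pre B.edges X, b p = b' p) :
    copyProb B X v b = copyProb B X v b' := by
  unfold copyProb
  have he : (fun p : {p // p ∈ Pre B.edges X} => b p.1) = (fun p => b' p.1) :=
    funext fun p => h p.1 p.2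
  rw [he]

lemma exists_sink (B : GBN V) {C : Finset V} (hC : IsCutset B.edges C)
    {S : Finset V} (hS : ∀ x ∈ S, x ∉ C) (hne : S.Nonempty) :
    ∃ X ∈ S, ∀ y ∈ S, (X, y) ∉ B.edges := by
  set rel : V → V → Prop := fun a b => (a, b) ∈ B.edges ∧ a ∉ C ∧ b ∉ C with hrel
  letI : IsTrans V (fun a b => Relation.TransGen rel b a) :=
    ⟨fun a b c hab hbc => Relation.TransGen.trans hbc hab⟩
  letI : IsIrrefl V (fun a b => Relation.TransGen rel b a) := ⟨fun a => hC a⟩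
  have hwf : WellFounded (fun a b : V => Relation.TransGen rel b a) :=
    Finite.wellFounded_of_trans_of_irrefl _
  obtain ⟨X, hXS, hmin⟩ := hwf.has_min (↑S) (Finset.coe_nonempty.mpr hne)
  refine ⟨X, hXS, fun y hy hedge => ?_⟩
  exact hmin y hy (Relation.TransGen.single ⟨hedge, hS X hXS, hS y hy⟩)

lemma no_self_edge (B : GBN V) {C : Finset V} (hC : IsCutset B.edges C)
    {X : V} (hX : X ∉ C) : (X, X) ∉ B.edges := fun h =>
  hC X (Relation.TransGen.single ⟨h, hX, hX⟩)

lemma sum_split_update (X : V) (g : (V → Bool) → ℝ) :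
    ∑ b : V → Bool, g b =
      ∑ b : V → Bool, if b X = true then g b + g (Function.update b X false) else 0 := by
  have hrhs : ∑ b : V → Bool, (if b X = true then g b + g (Function.update b X false) else 0)
      = ∑ b ∈ Finset.univ.filter (fun b : V → Bool => b X = true),
          (g b + g (Function.update b X false)) := by
    rw [Finset.sum_filter]
  rw [hrhs, Finset.sum_add_distrib]
  have hsplit := Finset.sum_filter_add_sum_filter_not Finset.univ
    (fun b : V → Bool => b X = true) g
  rw [← hsplit]
  congr 1
  symm
  refine Finset.sum_nbij' (i := fun b => Function.update b X false)
    (j := fun b => Function.update b X true) ?_ ?_ ?_ ?_ ?_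
  · intro b hb
    rw [Finset.mem_filter]
    refine ⟨Finset.mem_univ _, ?_⟩
    show ¬ Function.update b X false X = true
    rw [Function.update_self]
    simp
  · intro b hb
    rw [Finset.mem_filter]
    refine ⟨Finset.mem_univ _, ?_⟩
    show Function.update b X true X = true
    rw [Function.update_self]
  · intro b hb
    rw [Finset.mem_filter] at hb
    show Function.update (Function.update b X false) X true = b
    rw [Function.update_idem, ← hb.2]
    exact Function.update_eq_self X b
  · intro b hb
    rw [Finset.mem_filter] at hb
    have hb' : b X = false := by
      rcases Bool.eq_false_or_eq_true (b X) with h | h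
      · exact absurd h hb.2
      · exact h
    show Function.update (Function.update b X true) X false = b
    rw [Function.update_idem, ← hb']
    exact Function.update_eq_self X b
  · intro b hb
    rfl

set_option maxHeartbeats 2000000 in
/-- key telescoping lemma: summing the product of CPT factors over all
assignments that are free on an (acyclic, cutset-avoiding) set `S` gives 1 -/
lemma gsum_eq_one (B : GBN V) {C : Finset V} (hC : IsCutset B.edges C) :
    ∀ S : Finset V, (∀ x ∈ S, x ∉ C) → ∀ b0 : V → Bool,
      (∑ b : V → Bool, if ∀ x : V, x ∉ S → b x = b0 x
        then ∏ X ∈ S, copyProb B X (b X) b else 0) = 1 := by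
  intro S
  induction S using Finset.strongInduction with
  | _ S ih =>
    intro hS b0
    rcases S.eq_empty_or_nonempty with rfl | hne
    · rw [Finset.sum_eq_single b0]
      · rw [if_pos (fun x _ => rfl), Finset.prod_empty]
      · intro b _ hbne
        rw [if_neg]
        intro hcond
        exact hbne (funext fun x => hcond x (Finset.notMem_empty x))
      · intro h
        exact absurd (Finset.mem_univ _) h
    · obtain ⟨X, hXS, hsink⟩ := exists_sink B hC hS hne
      have hXC : X ∉ C := hS X hXS
      have hXPreX : X ∉ Pre B.edges X := fun h => no_self_edge B hC hXC (mem_Pre.mp h)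
      rw [sum_split_update X]
      have key : ∀ b : V → Bool,
          (if b X = true then
            (if ∀ x : V, x ∉ S → b x = b0 x then ∏ X' ∈ S, copyProb B X' (b X') b else 0) +
            (if ∀ x : V, x ∉ S → Function.update b X false x = b0 x then
              ∏ X' ∈ S, copyProb B X' (Function.update b X false X') (Function.update b X false)
             else 0)
           else 0)
          = if ∀ x : V, x ∉ S.erase X → b x = Function.update b0 X true x then
              ∏ X' ∈ S.erase X, copyProb B X' (b X') b else 0 := by
        intro b
        by_cases hbX : b X = true
        · rw [if_pos hbX]
          have hcondu : (∀ x : V, x ∉ S → Function.update b X false x = b0 x) ↔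
              (∀ x : V, x ∉ S → b x = b0 x) := by
            constructor
            · intro h x hx
              have hxX : x ≠ X := fun he => hx (he ▸ hXS)
              have := h x hx
              rwa [Function.update_of_ne hxX] at this
            · intro h x hx
              have hxX : x ≠ X := fun he => hx (he ▸ hXS)
              rw [Function.update_of_ne hxX]
              exact h x hx
          have hcond' : (∀ x : V, x ∉ S.erase X → b x = Function.update b0 X true x) ↔
              (∀ x : V, x ∉ S → b x = b0 x) := by
            constructor
            · intro h x hx
              have hxe : x ∉ S.erase X := fun hm => hx (Finset.mem_of_mem_erase hm)
              have hxX : x ≠ X := fun he => hx (he ▸ hXS)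
              have := h x hxe
              rwa [Function.update_of_ne hxX] at this
            · intro h x hx
              by_cases hxX : x = X
              · rw [hxX, Function.update_self]
                exact hxX ▸ hbX
              · have hxS : x ∉ S := fun hm => hx (Finset.mem_erase.mpr ⟨hxX, hm⟩)
                rw [Function.update_of_ne hxX]
                exact h x hxS
          by_cases hcnd : ∀ x : V, x ∉ S → b x = b0 x
          · rw [if_pos hcnd, if_pos (hcondu.mpr hcnd), if_pos (hcond'.mpr hcnd)]
            have hprod1 : ∏ X' ∈ S, copyProb B X' (b X') b =
                copyProb B X (b X) b * ∏ X' ∈ S.erase X, copyProb B X' (b X') b :=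
              (Finset.mul_prod_erase S _ hXS).symm
            have hpar : ∀ X' ∈ S.erase X, ∀ p ∈ Pre B.edges X',
                Function.update b X false p = b p := by
              intro X' hX' p hp
              have hpX : p ≠ X := by
                intro he
                rw [he] at hp
                exact hsink X' (Finset.mem_of_mem_erase hX') (mem_Pre.mp hp)
              exact Function.update_of_ne hpX _ _
            have hprod2 : ∏ X' ∈ S, copyProb B X'
                  (Function.update b X false X') (Function.update b X false) =
                copyProb B X false b * ∏ X' ∈ S.erase X, copyProb B X' (b X') b := by
              rw [← Finset.mul_prod_erase S _ hXS]
              congr 1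
              · rw [Function.update_self]
                refine copyProb_congr B X false fun p hp => ?_
                have hpX : p ≠ X := fun he => hXPreX (by rwa [he] at hp)
                exact Function.update_of_ne hpX _ _
              · refine Finset.prod_congr rfl fun X' hX' => ?_
                have hX'ne : X' ≠ X := Finset.ne_of_mem_erase hX'
                rw [Function.update_of_ne hX'ne]
                exact copyProb_congr B X' (b X') (hpar X' hX')
            rw [hprod1, hprod2, hbX]
            have hcp : copyProb B X true b + copyProb B X false b = 1 := by
              have := sum_copyProb B X b
              rwa [Fintype.sum_bool] at this
            rw [← add_mul, hcp, one_mul]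
          · rw [if_neg hcnd, if_neg (fun h => hcnd (hcondu.mp h)),
              if_neg (fun h => hcnd (hcond'.mp h)), add_zero]
        · rw [if_neg hbX]
          symm
          rw [if_neg]
          intro hcond
          apply hbX
          have hXe : X ∉ S.erase X := Finset.notMem_erase X S
          have := hcond X hXe
          rwa [Function.update_self] at this
      rw [Finset.sum_congr rfl fun b _ => key b]
      exact ih (S.erase X) (Finset.erase_ssubset hXS)
        (fun x hx => hS x (Finset.mem_of_mem_erase hx)) (Function.update b0 X true)

end GBNpart2
section GBNpart3

variable {V : Type} [Fintype V] [DecidableEq V]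

set_option maxHeartbeats 2000000 in
lemma cutsetP_rowsum_le_one (B : GBN V) {C : Finset V} (hC : IsCutset B.edges C)
    (b : Asg C) : ∑ c : Asg C, cutsetP B C b c ≤ 1 := by
  have h1 : ∑ c : Asg C, cutsetP B C b c = ∑ a : V → Bool, Next B C (DiracD b) a :=
    sum_marginal _ C
  rw [h1, sum_Next]
  rw [Finset.sum_congr rfl fun b' _ => sum_distDissect_copies B C (DiracD b) b']
  set R : Finset V := (Finset.univ \ InitSet B.edges) \ C with hR
  have hRC : ∀ x ∈ R, x ∉ C := fun x hx => (Finset.mem_sdiff.mp hx).2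
  have hRI : ∀ x ∈ R, x ∉ InitSet B.edges := fun x hx =>
    (Finset.mem_sdiff.mp (Finset.mem_sdiff.mp hx).1).2
  set H : (V → Bool) → ℝ := fun b' => B.ι (fun x => b' x.1) * DiracD b (fun x => b' x.1) *
    ∏ X ∈ R, copyProb B X (b' X) b' with hH
  show ∑ b' : V → Bool, H b' ≤ 1
  set sq : (V → Bool) → (V → Bool) := fun b' x => if x ∈ R then false else b' x with hsq
  have hpart : ∑ b' : V → Bool, H b' =
      ∑ b0 : V → Bool, ∑ b' : V → Bool, (if b0 = sq b' then H b' else 0) := by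
    rw [Finset.sum_comm]
    refine Finset.sum_congr rfl fun b' _ => ?_
    rw [Finset.sum_ite_eq' Finset.univ (sq b') (fun _ => H b')]
    simp
  rw [hpart]
  have hiff : ∀ b0 b' : V → Bool, b0 = sq b' ↔
      ((∀ x ∈ R, b0 x = false) ∧ ∀ x : V, x ∉ R → b' x = b0 x) := by
    intro b0 b'
    constructor
    · intro h
      constructor
      · intro x hx
        rw [h]
        simp only [hsq]
        rw [if_pos hx]
      · intro x hx
        rw [h]
        simp only [hsq]
        rw [if_neg hx]
    · rintro ⟨h1, h2⟩
      funext x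
      simp only [hsq]
      by_cases hx : x ∈ R
      · rw [if_pos hx]
        exact h1 x hx
      · rw [if_neg hx]
        exact (h2 x hx).symm
  have hinner : ∀ b0 : V → Bool, ∑ b' : V → Bool, (if b0 = sq b' then H b' else 0) =
      if (∀ x ∈ R, b0 x = false) ∧ (fun x : {x // x ∈ C} => b0 x.1) = b
      then B.ι (fun x => b0 x.1) else 0 := by
    intro b0
    by_cases hp : ∀ x ∈ R, b0 x = false
    · have step1 : ∑ b' : V → Bool, (if b0 = sq b' then H b' else 0) =
          (B.ι (fun x => b0 x.1) * DiracD b (fun x => b0 x.1)) *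
          ∑ b' : V → Bool, (if ∀ x : V, x ∉ R → b' x = b0 x
            then ∏ X ∈ R, copyProb B X (b' X) b' else 0) := by
        rw [Finset.mul_sum]
        refine Finset.sum_congr rfl fun b' _ => ?_
        by_cases hq : ∀ x : V, x ∉ R → b' x = b0 x
        · rw [if_pos ((hiff b0 b').mpr ⟨hp, hq⟩), if_pos hq]
          have e1 : (fun x : {x // x ∈ InitSet B.edges} => b' x.1) =
              (fun x => b0 x.1) := funext fun x => hq x.1 (hRI x.1 |> fun h => fun hm => h hm x.2)
          have e2 : (fun x : {x // x ∈ C} => b' x.1) = (fun x => b0 x.1) :=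
            funext fun x => hq x.1 (fun hm => hRC x.1 hm x.2)
          simp only [hH]
          rw [e1, e2]
        · rw [if_neg (fun h => hq ((hiff b0 b').mp h).2), if_neg hq, mul_zero]
      rw [step1, gsum_eq_one B hC R hRC b0, mul_one]
      unfold DiracD
      by_cases hd : (fun x : {x // x ∈ C} => b0 x.1) = b
      · rw [if_pos hd, if_pos ⟨hp, hd⟩, mul_one]
      · rw [if_neg hd, if_neg (fun h => hd h.2), mul_zero]
    · rw [if_neg (fun h => hp h.1)]
      refine Finset.sum_eq_zero fun b' _ => ?_
      rw [if_neg (fun h => hp ((hiff b0 b').mp h).1)]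
  rw [Finset.sum_congr rfl fun b0 _ => hinner b0]
  -- final bound via injectivity of the restriction map
  set T : Finset (V → Bool) := Finset.univ.filter
    (fun b0 => (∀ x ∈ R, b0 x = false) ∧ (fun x : {x // x ∈ C} => b0 x.1) = b) with hT
  have hsum : (∑ b0 : V → Bool, if (∀ x ∈ R, b0 x = false) ∧
      (fun x : {x // x ∈ C} => b0 x.1) = b then B.ι (fun x => b0 x.1) else 0) =
      ∑ b0 ∈ T, B.ι (fun x => b0 x.1) := (Finset.sum_filter _ _).symm
  rw [hsum]
  have hinj : ∀ b0 ∈ T, ∀ b1 ∈ T,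
      (fun x : {x // x ∈ InitSet B.edges} => b0 x.1) =
        (fun x : {x // x ∈ InitSet B.edges} => b1 x.1) → b0 = b1 := by
    intro b0 hb0 b1 hb1 heq
    rw [hT, Finset.mem_filter] at hb0 hb1
    funext x
    by_cases hxC : x ∈ C
    · have e0 := congrFun hb0.2.2 ⟨x, hxC⟩
      have e1 := congrFun hb1.2.2 ⟨x, hxC⟩
      rw [e0, e1]
    · by_cases hxI : x ∈ InitSet B.edges
      · exact congrFun heq ⟨x, hxI⟩
      · have hxR : x ∈ R := by
          rw [hR]
          rw [Finset.mem_sdiff, Finset.mem_sdiff]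
          exact ⟨⟨Finset.mem_univ x, hxI⟩, hxC⟩
        rw [hb0.2.1 x hxR, hb1.2.1 x hxR]
  have himg : ∑ b0 ∈ T, B.ι (fun x => b0 x.1) =
      ∑ a ∈ T.image (fun b0 (x : {x // x ∈ InitSet B.edges}) => b0 x.1), B.ι a := by
    rw [Finset.sum_image hinj]
  rw [himg]
  have hle : ∑ a ∈ T.image (fun b0 (x : {x // x ∈ InitSet B.edges}) => b0 x.1), B.ι a ≤
      ∑ a : Asg (InitSet B.edges), B.ι a :=
    Finset.sum_le_sum_of_subset_of_nonneg (Finset.subset_univ _)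
      (fun a _ _ => B.ι_dist.1 a)
  rw [B.ι_dist.2] at hle
  exact hle

end GBNpart3


/-- For a GBN `B` with cutset `C`, a cutset distribution `γ`, and
the cutset Markov chain with transition matrix `P = cutsetP B C`, the following
are equivalent: (a) `γ = γ·P`; (b) `γ` is the Cesàro limit of the transient
distributions from some initial cutset distribution `γ0`; (c) `γ` lies in the
convex hull of the long-run frequency distributions of the bottom SCCs of the
chain (each padded with zeros outside its BSCC); (d) `γ = Next(B,C,γ)|_C`. -/
theorem stmt3 {V : Type} [Fintype V] [DecidableEq V]
    (B : GBN V) (C : Finset V) (hC : IsCutset B.edges C)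
    (γ : Asg C → ℝ) (hγ : IsDist γ) :
    ((γ = vecMul γ (cutsetP B C)) ↔
      (∃ γ0 : Asg C → ℝ, IsDist γ0 ∧
        Tendsto (cesaro (matIter (cutsetP B C) γ0)) atTop (nhds γ))) ∧
    ((γ = vecMul γ (cutsetP B C)) ↔
      γ ∈ convexHull ℝ { ν : Asg C → ℝ | ∃ D : Set (Asg C), ∃ x ∈ D,
        IsBSCC (cutsetP B C) D ∧
        Tendsto (cesaro (matIter (cutsetP B C) (DiracD x))) atTop (nhds ν) }) ∧
    ((γ = vecMul γ (cutsetP B C)) ↔ γ = marginal (Next B C γ) C) := by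
  have hP0 : ∀ b c : Asg C, 0 ≤ cutsetP B C b c := cutsetP_nonneg B C
  have hP1 : ∀ b : Asg C, ∑ c, cutsetP B C b c ≤ 1 := fun b => cutsetP_rowsum_le_one B hC b
  obtain ⟨h1, h2⟩ := abstract_stmt hP0 hP1 hγ
  refine ⟨h1, h2, ?_⟩
  rw [marginal_Next_eq_vecMul]

end GBNPaper
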